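/- Let M be a finite metabelian 3-group with M^ab ≅ Z/3 × Z/3 and coclass cc(M) ≥ 2 (i.e. M is not of maximal class). Then no maximal subgroup of M is abelian. -/

import Mathlib

open scoped commutatorElement

/-- Let `M` be a finite metabelian 3-group with
`M^ab ≅ Z/3 × Z/3` and coclass `cc(M) ≥ 2` (not of maximal class).
Then no maximal subgroup of `M` is abelian. -/
theorem no_abelian_maximal_subgroup
    (M : Type*) [Group M] [Finite M] (n c : ℕ)
    (hmeta : IsMulCommutative (commutator M))
    (hcard : Nat.card M = 3 ^ n)
    (hab : Nonempty (Abelianization M ≃* Multiplicative (ZMod 3 × ZMod 3)))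
    (hcl : IsLeast {i | (⊤ : Subgroup M).lowerCentralSeries i = ⊥} c)
    (hr2 : 2 ≤ n - c) :
    ∀ H : Subgroup M, IsCoatom H → ¬ IsMulCommutative H := by
  intro H hH hHc
  haveI := hHc
  haveI : Fact (Nat.Prime 3) := ⟨by norm_num⟩
  have hp : IsPGroup 3 M := IsPGroup.of_card hcard
  haveI : Group.IsNilpotent M := hp.isNilpotent
  have hHnorm : H.Normal :=
    Subgroup.NormalizerCondition.normal_of_coatom H normalizerCondition_of_isNilpotent hH
  haveI := hHnorm
  -- commuting inside H
  have hcm : ∀ a b : M, a ∈ H → b ∈ H → a * b = b * a := fun a b ha hb =>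
    Subgroup.mul_comm_of_mem_isMulCommutative H ha hb
  -- an element outside H
  obtain ⟨x, hx⟩ : ∃ x : M, x ∉ H := by
    by_contra hcon
    push_neg at hcon
    exact hH.1 ((Subgroup.eq_top_iff' H).mpr hcon)
  have hxlt : H < H ⊔ Subgroup.zpowers x := by
    rw [SetLike.lt_iff_le_and_exists]
    exact ⟨le_sup_left, x, Subgroup.mem_sup_right (Subgroup.mem_zpowers x), hx⟩
  have htop : H ⊔ Subgroup.zpowers x = ⊤ := hH.2 _ hxlt
  -- the quotient by H has order 3
  have hQp : IsPGroup 3 (M ⧸ H) := hp.to_quotient H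
  have hQ3 : Nat.card (M ⧸ H) = 3 := by
    obtain ⟨k, hk⟩ := IsPGroup.iff_card.mp hQp
    have hk0 : k ≠ 0 := by
      intro h0
      rw [h0, pow_zero] at hk
      haveI hsub : Subsingleton (M ⧸ H) := (Nat.card_eq_one_iff_unique.mp hk).1
      apply hH.1
      rw [Subgroup.eq_top_iff']
      intro g
      have h1 : ((g : M ⧸ H)) = 1 := Subsingleton.elim _ _
      exact (QuotientGroup.eq_one_iff g).mp h1
    obtain ⟨y, hy⟩ := exists_prime_orderOf_dvd_card' (G := M ⧸ H) 3
      (by rw [hk]; exact dvd_pow_self 3 hk0)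
    obtain ⟨m, hm⟩ := QuotientGroup.mk'_surjective H y
    have hmH : m ∉ H := by
      intro hmem
      have h1 : y = 1 := by
        rw [← hm, QuotientGroup.mk'_apply]
        exact (QuotientGroup.eq_one_iff m).mpr hmem
      rw [h1, orderOf_one] at hy
      norm_num at hy
    have hlt : H < (Subgroup.zpowers y).comap (QuotientGroup.mk' H) := by
      rw [SetLike.lt_iff_le_and_exists]
      refine ⟨?_, m, ?_, hmH⟩
      · intro h hh
        rw [Subgroup.mem_comap]
        have h1 : QuotientGroup.mk' H h = 1 := by
          rw [QuotientGroup.mk'_apply]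
          exact (QuotientGroup.eq_one_iff h).mpr hh
        rw [h1]
        exact one_mem _
      · rw [Subgroup.mem_comap, hm]
        exact Subgroup.mem_zpowers y
    have htop2 := hH.2 _ hlt
    have hzy : Subgroup.zpowers y = ⊤ := by
      have h2 := Subgroup.map_comap_eq_self_of_surjective
        (QuotientGroup.mk'_surjective H) (Subgroup.zpowers y)
      rw [htop2, Subgroup.map_top_of_surjective _ (QuotientGroup.mk'_surjective H)] at h2
      exact h2.symm
    calc Nat.card (M ⧸ H) = Nat.card (⊤ : Subgroup (M ⧸ H)) := (Subgroup.card_top).symm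
      _ = Nat.card (Subgroup.zpowers y) := by rw [hzy]
      _ = 3 := by rw [Nat.card_zpowers]; exact hy
  -- commutator M ≤ H
  have hQcyc : IsCyclic (M ⧸ H) := isCyclic_of_prime_card hQ3
  obtain ⟨q, hq⟩ := hQcyc.exists_generator
  have hQcomm : ∀ s t : M ⧸ H, s * t = t * s := by
    intro s t
    obtain ⟨a, ha⟩ := Subgroup.mem_zpowers_iff.mp (hq s)
    obtain ⟨b, hb⟩ := Subgroup.mem_zpowers_iff.mp (hq t)
    rw [← ha, ← hb, ← zpow_add, ← zpow_add, add_comm]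
  have hcommH : commutator M ≤ H := by
    rw [commutator_def, Subgroup.commutator_le]
    intro g₁ _ g₂ _
    rw [← QuotientGroup.eq_one_iff]
    have h1 : ((⁅g₁, g₂⁆ : M) : M ⧸ H) = ⁅(g₁ : M ⧸ H), (g₂ : M ⧸ H)⁆ := by
      simp [commutatorElement_def]
    rw [h1, commutatorElement_eq_one_iff_commute]
    exact hQcomm _ _
  -- conjugation keeps H
  have hσ : ∀ a : M, a ∈ H → x⁻¹ * a * x ∈ H := by
    intro a ha
    have := hHnorm.conj_mem a ha x⁻¹
    simpa using this
  have hσ' : ∀ a : M, a ∈ H → x * a * x⁻¹ ∈ H := fun a ha => hHnorm.conj_mem a ha x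
  -- the key homomorphism
  let φ : H →* M := MonoidHom.mk' (fun a => (a : M)⁻¹ * (x⁻¹ * a * x)) (by
    intro a b
    have hua : ((a : M))⁻¹ * (x⁻¹ * a * x) ∈ H := H.mul_mem (H.inv_mem a.2) (hσ a a.2)
    have key : (b : M)⁻¹ * (((a : M))⁻¹ * (x⁻¹ * a * x)) =
        (((a : M))⁻¹ * (x⁻¹ * a * x)) * (b : M)⁻¹ :=
      hcm _ _ (H.inv_mem b.2) hua
    push_cast
    calc ((a : M) * (b : M))⁻¹ * (x⁻¹ * ((a : M) * (b : M)) * x)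
        = (b : M)⁻¹ * (((a : M))⁻¹ * (x⁻¹ * (a : M) * x)) * (x⁻¹ * (b : M) * x) := by
          group
      _ = (((a : M))⁻¹ * (x⁻¹ * (a : M) * x)) * ((b : M)⁻¹ * (x⁻¹ * (b : M) * x)) := by
          rw [key]; group)
  have hφ : ∀ a : H, φ a = (a : M)⁻¹ * (x⁻¹ * a * x) := fun a => rfl
  have hKle : φ.range ≤ H := by
    rintro m ⟨a, rfl⟩
    rw [hφ]
    exact H.mul_mem (H.inv_mem a.2) (hσ a a.2)
  -- range of φ is normal
  have hxnorm : x ∈ Subgroup.normalizer (φ.range : Set M) := by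
    rw [Subgroup.mem_normalizer_iff]
    intro k
    constructor
    · rintro ⟨a, rfl⟩
      refine ⟨⟨x * a * x⁻¹, hσ' a a.2⟩, ?_⟩
      rw [hφ, hφ]
      show (x * (a : M) * x⁻¹)⁻¹ * (x⁻¹ * (x * (a : M) * x⁻¹) * x) =
        x * (((a : M))⁻¹ * (x⁻¹ * (a : M) * x)) * x⁻¹
      group
    · rintro ⟨a, ha⟩
      rw [hφ] at ha
      refine ⟨⟨x⁻¹ * a * x, hσ a a.2⟩, ?_⟩
      rw [hφ]
      show (x⁻¹ * (a : M) * x)⁻¹ * (x⁻¹ * (x⁻¹ * (a : M) * x) * x) = k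
      calc (x⁻¹ * (a : M) * x)⁻¹ * (x⁻¹ * (x⁻¹ * (a : M) * x) * x)
          = x⁻¹ * (((a : M))⁻¹ * (x⁻¹ * (a : M) * x)) * x := by group
        _ = x⁻¹ * (x * k * x⁻¹) * x := by rw [ha]
        _ = k := by group
  have hHnormK : ∀ h ∈ H, h ∈ Subgroup.normalizer (φ.range : Set M) := by
    intro h hh
    rw [Subgroup.mem_normalizer_iff]
    intro k
    constructor
    · intro hk
      have hkH : k ∈ H := hKle hk
      have hc : h * k = k * h := hcm _ _ hh hkH
      have h1 : h * k * h⁻¹ = k := by rw [hc]; group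
      rwa [h1]
    · intro hk
      have hkH : k ∈ H := by
        have h1 : h * k * h⁻¹ ∈ H := hKle hk
        have h2 : h⁻¹ * (h * k * h⁻¹) * h = k := by group
        rw [← h2]
        exact H.mul_mem (H.mul_mem (H.inv_mem hh) h1) hh
      have hc : h * k = k * h := hcm _ _ hh hkH
      have h1 : h * k * h⁻¹ = k := by rw [hc]; group
      rwa [h1] at hk
  have hKnorm : (φ.range).Normal := by
    rw [← Subgroup.normalizer_eq_top_iff, ← top_le_iff, ← htop]
    exact sup_le (fun h hh => hHnormK h hh) (Subgroup.zpowers_le.mpr hxnorm)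
  haveI := hKnorm
  -- the quotient by the range is abelian, hence commutator M ≤ φ.range
  set π := QuotientGroup.mk' φ.range with hπdef
  have key : ∀ a : M, a ∈ H → Commute (π a) (π x) := by
    intro a ha
    have h1 : π (a⁻¹ * (x⁻¹ * a * x)) = 1 := by
      rw [← MonoidHom.mem_ker, QuotientGroup.ker_mk']
      exact ⟨⟨a, ha⟩, rfl⟩
    have h2 : ⁅(π a)⁻¹, (π x)⁻¹⁆ = 1 := by
      rw [← map_inv, ← map_inv, ← map_commutatorElement]
      rw [show ⁅a⁻¹, x⁻¹⁆ = a⁻¹ * (x⁻¹ * a * x) from by group]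
      exact h1
    have h3 := commutatorElement_eq_one_iff_commute.mp h2
    simpa using h3.inv_inv
  have hsurj : Function.Surjective π := QuotientGroup.mk'_surjective φ.range
  have hgen : Subgroup.map π H ⊔ Subgroup.zpowers (π x) = ⊤ := by
    rw [← MonoidHom.map_zpowers, ← Subgroup.map_sup, htop]
    exact Subgroup.map_top_of_surjective π hsurj
  have hcent : ∀ u : M ⧸ φ.range, (∀ a ∈ H, Commute (π a) u) → Commute (π x) u →
      u ∈ Subgroup.center (M ⧸ φ.range) := by
    intro u h1 h2
    rw [Subgroup.mem_center_iff]
    intro g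
    have hg : g ∈ Subgroup.map π H ⊔ Subgroup.zpowers (π x) := by
      rw [hgen]; trivial
    have hle : Subgroup.map π H ⊔ Subgroup.zpowers (π x) ≤ Subgroup.centralizer {u} := by
      refine sup_le ?_ ?_
      · rintro g' ⟨a, ha, rfl⟩
        refine Subgroup.mem_centralizer_iff.mpr (fun w hw => ?_)
        rw [Set.mem_singleton_iff] at hw
        subst hw
        exact ((h1 a ha).symm).eq
      · rw [Subgroup.zpowers_le]
        refine Subgroup.mem_centralizer_iff.mpr (fun w hw => ?_)
        rw [Set.mem_singleton_iff] at hw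
        subst hw
        exact (h2.symm).eq
    exact (Subgroup.mem_centralizer_iff.mp (hle hg) u rfl).symm
  have hQab : ∀ s t : M ⧸ φ.range, s * t = t * s := by
    have hc : (⊤ : Subgroup (M ⧸ φ.range)) ≤ Subgroup.center (M ⧸ φ.range) := by
      rw [← hgen]
      refine sup_le ?_ ?_
      · rintro g ⟨a, ha, rfl⟩
        refine hcent _ (fun b hb => ?_) (key a ha).symm
        exact Commute.map (by exact hcm b a hb ha) π
      · intro g hg
        obtain ⟨k, rfl⟩ := Subgroup.mem_zpowers_iff.mp hg
        refine hcent _ (fun b hb => (key b hb).zpow_right k) ((Commute.refl (π x)).zpow_right k)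
    intro s t
    exact (Subgroup.mem_center_iff.mp (hc (Subgroup.mem_top t)) s)
  have hcK : commutator M ≤ φ.range := by
    rw [commutator_def, Subgroup.commutator_le]
    intro g₁ _ g₂ _
    rw [← QuotientGroup.eq_one_iff]
    have h1 : ((⁅g₁, g₂⁆ : M) : M ⧸ φ.range) = ⁅(g₁ : M ⧸ φ.range), (g₂ : M ⧸ φ.range)⁆ := by
      simp [commutatorElement_def]
    rw [h1, commutatorElement_eq_one_iff_commute]
    exact hQab _ _
  -- cardinality bookkeeping
  obtain ⟨e⟩ := hab
  have h9 : Nat.card (Abelianization M) = 9 := by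
    rw [Nat.card_congr (e.toEquiv.trans Multiplicative.toAdd), Nat.card_prod,
      Nat.card_zmod]
  have hML1 : 9 * Nat.card ((⊤ : Subgroup M).lowerCentralSeries 1) = 3 ^ n := by
    have h0 := Subgroup.card_eq_card_quotient_mul_card_subgroup (commutator M)
    rw [hcard] at h0
    have hq : Nat.card (M ⧸ commutator M) = 9 := h9
    rw [hq] at h0
    rw [Subgroup.top_lowerCentralSeries_one]
    omega
  have hMH : 3 * Nat.card H = 3 ^ n := by
    have h0 := Subgroup.card_eq_card_quotient_mul_card_subgroup H
    rw [hcard, hQ3] at h0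
    omega
  have hfst : Nat.card H = Nat.card φ.range * Nat.card φ.ker := by
    rw [Subgroup.card_eq_card_quotient_mul_card_subgroup φ.ker]
    congr 1
    exact Nat.card_congr (QuotientGroup.quotientKerEquivRange φ).toEquiv
  have hL1le : (⊤ : Subgroup M).lowerCentralSeries 1 ≤ φ.range := by
    rw [Subgroup.top_lowerCentralSeries_one]; exact hcK
  have hlr : Nat.card ((⊤ : Subgroup M).lowerCentralSeries 1) ≤ Nat.card φ.range :=
    Subgroup.card_le_of_le hL1le
  have hlpos : 0 < Nat.card ((⊤ : Subgroup M).lowerCentralSeries 1) := Nat.card_pos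
  have hrk : Nat.card φ.range * Nat.card φ.ker = 3 * Nat.card ((⊤ : Subgroup M).lowerCentralSeries 1) := by
    have h0 : 3 * (Nat.card φ.range * Nat.card φ.ker) =
        3 * (3 * Nat.card ((⊤ : Subgroup M).lowerCentralSeries 1)) := by
      rw [← hfst, hMH, ← hML1]; ring
    exact Nat.eq_of_mul_eq_mul_left (by norm_num) h0
  have hker3 : Nat.card φ.ker ≤ 3 := by
    by_contra hcon
    push_neg at hcon
    have h4 : 4 ≤ Nat.card φ.ker := hcon
    have h1 : 4 * Nat.card ((⊤ : Subgroup M).lowerCentralSeries 1) ≤ Nat.card φ.ker * Nat.card φ.range :=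
      Nat.mul_le_mul h4 hlr
    rw [Nat.mul_comm (Nat.card φ.ker), hrk] at h1
    omega
  -- each step of the lower central series (from step 1 on) has index ≤ 3
  have step : ∀ i, 1 ≤ i → Nat.card ((⊤ : Subgroup M).lowerCentralSeries i) ≤
      3 * Nat.card ((⊤ : Subgroup M).lowerCentralSeries (i + 1)) := by
    intro i hi
    have hLH : (⊤ : Subgroup M).lowerCentralSeries i ≤ H :=
      le_trans (le_trans (Subgroup.lowerCentralSeries_antitone _ hi) (le_of_eq (Subgroup.top_lowerCentralSeries_one)))
        hcommH
    set ψ : (⊤ : Subgroup M).lowerCentralSeries i →* M := φ.comp (Subgroup.inclusion hLH) with hψdef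
    have hψa : ∀ a : (⊤ : Subgroup M).lowerCentralSeries i, ψ a = (a : M)⁻¹ * (x⁻¹ * a * x) := by
      intro a
      rw [hψdef, MonoidHom.comp_apply, hφ, Subgroup.coe_inclusion]
    have hψr : ψ.range ≤ (⊤ : Subgroup M).lowerCentralSeries (i + 1) := by
      rintro m ⟨a, rfl⟩
      rw [hψa]
      have hmem : ((a : M))⁻¹ ∈ (⊤ : Subgroup M).lowerCentralSeries i := ((⊤ : Subgroup M).lowerCentralSeries i).inv_mem a.2
      rw [show ((a : M))⁻¹ * (x⁻¹ * a * x) = ⁅((a : M))⁻¹, x⁻¹⁆ from by group]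
      have hsucc : (⊤ : Subgroup M).lowerCentralSeries (i + 1) = ⁅(⊤ : Subgroup M).lowerCentralSeries i, ⊤⁆ := rfl
      rw [hsucc]
      exact Subgroup.commutator_mem_commutator hmem (Subgroup.mem_top _)
    have hcardeq : Nat.card ((⊤ : Subgroup M).lowerCentralSeries i) =
        Nat.card ψ.range * Nat.card ψ.ker := by
      rw [Subgroup.card_eq_card_quotient_mul_card_subgroup ψ.ker]
      congr 1
      exact Nat.card_congr (QuotientGroup.quotientKerEquivRange ψ).toEquiv
    have h1 : Nat.card ψ.range ≤ Nat.card ((⊤ : Subgroup M).lowerCentralSeries (i + 1)) :=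
      Subgroup.card_le_of_le hψr
    have h2 : Nat.card ψ.ker ≤ 3 := by
      have hinj : Function.Injective (fun a : ψ.ker =>
          (⟨Subgroup.inclusion hLH a.1, by
            have ha := a.2
            rw [MonoidHom.mem_ker] at ha
            exact MonoidHom.mem_ker.mpr ha⟩ : φ.ker)) := by
        intro a b hab
        have h' : Subgroup.inclusion hLH a.1 = Subgroup.inclusion hLH b.1 :=
          congrArg Subtype.val hab
        exact Subtype.ext (Subgroup.inclusion_injective hLH h')
      exact le_trans (Nat.card_le_card_of_injective _ hinj) hker3
    calc Nat.card ((⊤ : Subgroup M).lowerCentralSeries i) = Nat.card ψ.range * Nat.card ψ.ker := hcardeq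
      _ ≤ Nat.card ((⊤ : Subgroup M).lowerCentralSeries (i + 1)) * 3 := Nat.mul_le_mul h1 h2
      _ = 3 * Nat.card ((⊤ : Subgroup M).lowerCentralSeries (i + 1)) := Nat.mul_comm _ _
  have chain : ∀ j, Nat.card ((⊤ : Subgroup M).lowerCentralSeries 1) ≤
      3 ^ j * Nat.card ((⊤ : Subgroup M).lowerCentralSeries (1 + j)) := by
    intro j
    induction j with
    | zero => simp
    | succ j ih =>
      have h := step (1 + j) (by omega)
      calc Nat.card ((⊤ : Subgroup M).lowerCentralSeries 1)
          ≤ 3 ^ j * Nat.card ((⊤ : Subgroup M).lowerCentralSeries (1 + j)) := ih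
        _ ≤ 3 ^ j * (3 * Nat.card ((⊤ : Subgroup M).lowerCentralSeries (1 + j + 1))) :=
            Nat.mul_le_mul_left _ h
        _ = 3 ^ (j + 1) * Nat.card ((⊤ : Subgroup M).lowerCentralSeries (1 + (j + 1))) := by
            rw [show 1 + j + 1 = 1 + (j + 1) from by omega]; ring
  -- final contradiction
  have hc1 : 1 ≤ c := by
    by_contra hc0
    push_neg at hc0
    have hc0' : c = 0 := by omega
    have hbot : (⊤ : Subgroup M) = ⊥ := by
      rw [← Subgroup.lowerCentralSeries_zero (⊤ : Subgroup M)]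
      rw [hc0'] at hcl
      exact hcl.1
    have hone : Nat.card M = 1 := by
      rw [← Subgroup.card_top (G := M), hbot, Subgroup.card_bot]
    rw [hcard] at hone
    have hn0 : n = 0 := by
      by_contra hn
      have := Nat.one_lt_pow hn (by norm_num : 1 < 3)
      omega
    omega
  have hLc : (⊤ : Subgroup M).lowerCentralSeries c = ⊥ := hcl.1
  have hchain := chain (c - 1)
  rw [show 1 + (c - 1) = c from by omega, hLc, Subgroup.card_bot, mul_one] at hchain
  have hle : 3 ^ n ≤ 3 ^ (c + 1) := by
    calc 3 ^ n = 9 * Nat.card ((⊤ : Subgroup M).lowerCentralSeries 1) := hML1.symm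
      _ ≤ 9 * 3 ^ (c - 1) := Nat.mul_le_mul_left _ hchain
      _ = 3 ^ (c + 1) := by
          rw [show c + 1 = (c - 1) + 2 from by omega, pow_add]; ring
  have hnc := (Nat.pow_le_pow_iff_right (by norm_num : 1 < 3)).mp hle
  omega
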